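/- Let 0 < a < 1 and let k be a natural number with k ≥ exp(1/a). Define f_i(t) = i·t − i·a·H_{i−1} for 1 ≤ i ≤ k. Then for every t ≥ 0 there exists i with 1 ≤ i ≤ k such that f_i(t) mod 1 ∈ [0, a]. In other words, at every time at least one of the k runners (with distinct constant integer speeds 1, 2, ..., k) is inside the arc [0, a]. -/

import Mathlib

noncomputable def H (n : ℕ) : ℝ := ∑ i ∈ Finset.range n, 1 / (i + 1 : ℝ)

lemma H_eq_harmonic (n : ℕ) : H n = (harmonic n : ℝ) := by
  simp [H, harmonic, one_div]

lemma log_le_H (n : ℕ) : Real.log (n + 1) ≤ H n := by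
  have h := Real.strictMono_eulerMascheroniSeq.monotone (Nat.zero_le n)
  rw [Real.eulerMascheroniSeq_zero, Real.eulerMascheroniSeq] at h
  rw [H_eq_harmonic]
  linarith

lemma H_succ (n : ℕ) : H (n + 1) = H n + 1 / (n + 1 : ℝ) := by
  simp [H, Finset.sum_range_succ]

theorem covering_all_time (a : ℝ) (ha0 : 0 < a) (ha1 : a < 1) (k : ℕ)
    (hk : (k : ℝ) ≥ Real.exp (1 / a)) :
    ∀ t : ℝ, 0 ≤ t → ∃ i : ℕ, 1 ≤ i ∧ i ≤ k ∧
      Int.fract ((i : ℝ) * t - (i : ℝ) * a * H (i - 1)) ∈ Set.Icc 0 a := by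
  intro t ht
  set s := Int.fract t with hs
  have hs0 : 0 ≤ s := Int.fract_nonneg t
  have hs1 : s < 1 := Int.fract_lt_one t
  -- a * H k > 1
  have hk1 : (1 : ℝ) ≤ (k : ℝ) := le_trans (Real.one_le_exp (by positivity)) hk
  have hlogk : 1 / a ≤ Real.log k := by
    rw [← Real.log_exp (1 / a)]
    exact Real.log_le_log (Real.exp_pos _) hk
  have hHk : 1 / a < H k := by
    refine lt_of_lt_of_le (lt_of_le_of_lt hlogk ?_) (log_le_H k)
    exact Real.log_lt_log (by linarith) (by linarith)
  have haHk : 1 < a * H k := by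
    rw [div_lt_iff₀' ha0] at hHk
    exact hHk
  -- find minimal i with s < a * H i
  have hex : ∃ i, s < a * H i := ⟨k, by linarith⟩
  classical
  let i := Nat.find hex
  have hi_spec : s < a * H i := Nat.find_spec hex
  have hi_pos : 1 ≤ i := by
    by_contra h
    have hi0 : i = 0 := by omega
    have : s < a * H 0 := hi0 ▸ hi_spec
    simp [H] at this
    linarith
  have hi_le : i ≤ k := by
    by_contra h
    push_neg at h
    have := Nat.find_min hex (show k < i from h)
    exact this (by linarith)
  have hprev : a * H (i - 1) ≤ s := by
    have := Nat.find_min hex (show i - 1 < i by omega)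
    linarith [not_lt.mp this]
  have hHi : H i = H (i - 1) + 1 / (i : ℝ) := by
    have : i = (i - 1) + 1 := by omega
    rw [this, H_succ]
    congr 2
    push_cast [Nat.cast_sub hi_pos]
    ring
  have hipos : (0:ℝ) < (i:ℝ) := by exact_mod_cast hi_pos
  -- the value i*(s - a*H(i-1)) is in [0, a]
  have hval0 : 0 ≤ (i:ℝ) * (s - a * H (i - 1)) := by nlinarith
  have hvala : (i:ℝ) * (s - a * H (i - 1)) ≤ a := by
    have : s - a * H (i - 1) < a * (1 / (i:ℝ)) := by
      rw [hHi] at hi_spec; nlinarith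
    rw [mul_one_div, lt_div_iff₀ hipos] at this
    nlinarith
  refine ⟨i, hi_pos, hi_le, ?_⟩
  have hts : s = t - (⌊t⌋ : ℝ) := rfl
  have hrw : (i : ℝ) * t - (i : ℝ) * a * H (i - 1)
      = (i:ℝ) * (s - a * H (i - 1)) + ((i * ⌊t⌋ : ℤ) : ℝ) := by
    rw [hts]; push_cast; ring
  rw [hrw, Int.fract_add_intCast, Int.fract_eq_self.mpr ⟨hval0, by linarith⟩]
  exact ⟨hval0, hvala⟩
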